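/- Let P be a pyramid with row lengths r_1 ≥ ... ≥ r_N ≥ 1, and let e(P), h(P) be the associated endomorphisms of V(P) = ℂ^{B(P)}. Then ⁅h(P), e(P)⁆ = 2 • e(P) (commutator bracket on End(V(P))), and the pair (h(P), e(P)) is good: for every integer j ≤ -1 the map x ↦ ⁅e(P),x⁆ is injective from {x ∈ End(V(P)) : ⁅h(P),x⁆ = j • x} to {x : ⁅h(P),x⁆ = (j+2) • x}, and for every integer j ≥ -1 it is surjective onto {x : ⁅h(P),x⁆ = (j+2) • x}. -/

import Mathlib

/-- A pyramid with row lengths `r 0 ≥ r 1 ≥ ... ≥ r (N-1) ≥ 1` (bottom row first).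
Row `j` consists of boxes at columns `f j, f j + 2, ..., l j` where
`l j = f j + 2 * (r j - 1)`; the bottom row is centered at `0` (`f 0 = -(l 0)`), and
consecutive rows satisfy `f j ≤ f (j+1) ≤ l (j+1) ≤ l j`. -/
structure Pyramid where
  N : ℕ
  hN : 0 < N
  r : Fin N → ℕ
  f : Fin N → ℤ
  r_pos : ∀ j, 0 < r j
  r_anti : ∀ i j : Fin N, i ≤ j → r j ≤ r i
  centered : f ⟨0, hN⟩ = -(f ⟨0, hN⟩ + 2 * ((r ⟨0, hN⟩ : ℤ) - 1))
  left_nested : ∀ i j : Fin N, (i : ℕ) + 1 = (j : ℕ) → f i ≤ f j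
  right_nested : ∀ i j : Fin N, (i : ℕ) + 1 = (j : ℕ) →
    f j + 2 * ((r j : ℤ) - 1) ≤ f i + 2 * ((r i : ℤ) - 1)

namespace Pyramid

/-- The set of boxes of the pyramid: the `i`-th box (from the left) of row `j`. -/
abbrev Box (P : Pyramid) : Type := (j : Fin P.N) × Fin (P.r j)

/-- The column (first coordinate) of a box: box `(j, i)` sits at column `f j + 2 * i`. -/
def col (P : Pyramid) (b : P.Box) : ℤ := P.f b.1 + 2 * (b.2 : ℤ)

/-- The vector space `V(P) = ℂ^{B(P)}`. -/
abbrev V (P : Pyramid) : Type := P.Box → ℂ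

/-- The nilpotent endomorphism `e(P)` of `V(P)`, sending the basis vector of a box to
the basis vector of its right neighbour (i.e. the box in the same row whose column is
larger by 2), or to `0` if there is no right neighbour. -/
noncomputable def E (P : Pyramid) : Module.End ℂ P.V :=
  Matrix.toLin' (Matrix.of fun b b' : P.Box =>
    if b.1 = b'.1 ∧ (b.2 : ℕ) = (b'.2 : ℕ) + 1 then (1 : ℂ) else 0)

/-- The semisimple endomorphism `h(P)` of `V(P)`, acting on the basis vector of a box
by its column. -/
noncomputable def H (P : Pyramid) : Module.End ℂ P.V :=
  Matrix.toLin' (Matrix.diagonal fun b : P.Box => (P.col b : ℂ))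

end Pyramid

/-- The set of `ad h`-eigenvectors of `End(V)` with eigenvalue `j ∈ ℤ`:
the `j`-th graded piece of the `ℤ`-grading of `End(V)` determined by `h`. -/
def gradedPiece {V : Type*} [AddCommGroup V] [Module ℂ V]
    (h : Module.End ℂ V) (j : ℤ) : Set (Module.End ℂ V) :=
  {x | ⁅h, x⁆ = (j : ℂ) • x}

/-- The pair `(h, e)` is *good* if `ad e` is injective from the `j`-eigenspace of
`ad h` to the `(j+2)`-eigenspace for every integer `j ≤ -1`, and surjective onto the
`(j+2)`-eigenspace for every integer `j ≥ -1`. -/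
def IsGoodPair {V : Type*} [AddCommGroup V] [Module ℂ V]
    (h e : Module.End ℂ V) : Prop :=
  (∀ j : ℤ, j ≤ -1 →
    Set.InjOn (fun x : Module.End ℂ V => ⁅e, x⁆) (gradedPiece h j)) ∧
  (∀ j : ℤ, -1 ≤ j →
    Set.SurjOn (fun x : Module.End ℂ V => ⁅e, x⁆) (gradedPiece h j)
      (gradedPiece h (j + 2)))
namespace Pyramid

variable (P : Pyramid)

noncomputable def matE : Matrix P.Box P.Box ℂ :=
  Matrix.of fun b b' : P.Box =>
    if b.1 = b'.1 ∧ (b.2 : ℕ) = (b'.2 : ℕ) + 1 then (1 : ℂ) else 0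

noncomputable def matH : Matrix P.Box P.Box ℂ :=
  Matrix.diagonal fun b : P.Box => (P.col b : ℂ)

lemma E_def : P.E = Matrix.toLin' P.matE := rfl
lemma H_def' : P.H = Matrix.toLin' P.matH := rfl

lemma toLin'_bracket (A B : Matrix P.Box P.Box ℂ) :
    (⁅Matrix.toLin' A, Matrix.toLin' B⁆ : Module.End ℂ P.V) =
      Matrix.toLin' (A * B - B * A) := by
  rw [Ring.lie_def, map_sub, Matrix.toLin'_mul, Matrix.toLin'_mul]
  rfl

lemma f_mono : ∀ i j : Fin P.N, i ≤ j → P.f i ≤ P.f j := by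
  have key : ∀ (k : ℕ) (i j : Fin P.N), (j : ℕ) = (i : ℕ) + k → P.f i ≤ P.f j := by
    intro k
    induction k with
    | zero =>
      intro i j h
      have : i = j := Fin.ext (by omega)
      rw [this]
    | succ k ih =>
      intro i j h
      have hik : (i : ℕ) + k < P.N := by have := j.2; omega
      have h1 : P.f i ≤ P.f ⟨(i : ℕ) + k, hik⟩ := ih i ⟨(i : ℕ) + k, hik⟩ rfl
      have h2 : P.f ⟨(i : ℕ) + k, hik⟩ ≤ P.f j := P.left_nested _ j (by simp; omega)
      exact h1.trans h2
  intro i j hij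
  exact key ((j : ℕ) - (i : ℕ)) i j (by have := Fin.le_def.mp hij; omega)

lemma l_anti : ∀ i j : Fin P.N, i ≤ j →
    P.f j + 2 * ((P.r j : ℤ) - 1) ≤ P.f i + 2 * ((P.r i : ℤ) - 1) := by
  have key : ∀ (k : ℕ) (i j : Fin P.N), (j : ℕ) = (i : ℕ) + k →
      P.f j + 2 * ((P.r j : ℤ) - 1) ≤ P.f i + 2 * ((P.r i : ℤ) - 1) := by
    intro k
    induction k with
    | zero =>
      intro i j h
      have : i = j := Fin.ext (by omega)
      rw [this]
    | succ k ih =>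
      intro i j h
      have hik : (i : ℕ) + k < P.N := by have := j.2; omega
      have h1 := ih i ⟨(i : ℕ) + k, hik⟩ rfl
      have h2 := P.right_nested ⟨(i : ℕ) + k, hik⟩ j (by simp; omega)
      exact h2.trans h1
  intro i j hij
  exact key ((j : ℕ) - (i : ℕ)) i j (by have := Fin.le_def.mp hij; omega)

end Pyramid

namespace Pyramid
variable (P : Pyramid)

/-- Entry of a matrix at natural-number coordinates, `0` out of range. -/
def ent (X : Matrix P.Box P.Box ℂ) (s t : Fin P.N) (p q : ℕ) : ℂ :=
  if h : p < P.r s ∧ q < P.r t then X ⟨s, ⟨p, h.1⟩⟩ ⟨t, ⟨q, h.2⟩⟩ else 0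

lemma ent_of_lt {X : Matrix P.Box P.Box ℂ} {s t : Fin P.N} {p q : ℕ}
    (hp : p < P.r s) (hq : q < P.r t) :
    P.ent X s t p q = X ⟨s, ⟨p, hp⟩⟩ ⟨t, ⟨q, hq⟩⟩ := dif_pos ⟨hp, hq⟩

lemma ent_eq_zero {X : Matrix P.Box P.Box ℂ} {s t : Fin P.N} {p q : ℕ}
    (h : ¬(p < P.r s ∧ q < P.r t)) : P.ent X s t p q = 0 := dif_neg h

lemma matE_mul_apply (X : Matrix P.Box P.Box ℂ) (s t : Fin P.N) (p q : ℕ)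
    (hp : p < P.r s) (hq : q < P.r t) :
    (P.matE * X) ⟨s, ⟨p, hp⟩⟩ ⟨t, ⟨q, hq⟩⟩ =
      if p = 0 then 0 else P.ent X s t (p - 1) q := by
  rw [Matrix.mul_apply]
  rcases Nat.eq_zero_or_pos p with h0 | h0
  · subst h0
    rw [if_pos rfl]
    apply Finset.sum_eq_zero
    intro x _
    have hcond : ¬((⟨s, ⟨0, hp⟩⟩ : P.Box).1 = x.1 ∧
        (((⟨s, ⟨0, hp⟩⟩ : P.Box).2 : ℕ) = (x.2 : ℕ) + 1)) := by
      rintro ⟨-, h⟩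
      simp at h
    simp [matE, hcond]
  · have hp' : p - 1 < P.r s := lt_of_le_of_lt (Nat.sub_le _ _) hp
    rw [if_neg (by omega), P.ent_of_lt hp' hq]
    rw [Finset.sum_eq_single (⟨s, ⟨p - 1, hp'⟩⟩ : P.Box)]
    · have hcond : (⟨s, ⟨p, hp⟩⟩ : P.Box).1 = (⟨s, ⟨p - 1, hp'⟩⟩ : P.Box).1 ∧
          ((⟨s, ⟨p, hp⟩⟩ : P.Box).2 : ℕ) = ((⟨s, ⟨p - 1, hp'⟩⟩ : P.Box).2 : ℕ) + 1 := by
        exact ⟨rfl, by simp; omega⟩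
      simp [matE, hcond, Nat.sub_add_cancel h0]
    · intro x _ hx
      have hcond : ¬((⟨s, ⟨p, hp⟩⟩ : P.Box).1 = x.1 ∧
          ((⟨s, ⟨p, hp⟩⟩ : P.Box).2 : ℕ) = (x.2 : ℕ) + 1) := by
        rintro ⟨h1, h2⟩
        apply hx
        obtain ⟨u, i⟩ := x
        simp only at h1 h2
        subst h1
        have : i = ⟨p - 1, hp'⟩ := Fin.ext (by simp at h2 ⊢; omega)
        rw [this]
      simp [matE, hcond]
    · intro h
      exact absurd (Finset.mem_univ _) h
  
lemma mul_matE_apply (X : Matrix P.Box P.Box ℂ) (s t : Fin P.N) (p q : ℕ)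
    (hp : p < P.r s) (hq : q < P.r t) :
    (X * P.matE) ⟨s, ⟨p, hp⟩⟩ ⟨t, ⟨q, hq⟩⟩ = P.ent X s t p (q + 1) := by
  rw [Matrix.mul_apply]
  by_cases hq1 : q + 1 < P.r t
  · rw [P.ent_of_lt hp hq1]
    rw [Finset.sum_eq_single (⟨t, ⟨q + 1, hq1⟩⟩ : P.Box)]
    · have hcond : (⟨t, ⟨q + 1, hq1⟩⟩ : P.Box).1 = (⟨t, ⟨q, hq⟩⟩ : P.Box).1 ∧
          ((⟨t, ⟨q + 1, hq1⟩⟩ : P.Box).2 : ℕ) = ((⟨t, ⟨q, hq⟩⟩ : P.Box).2 : ℕ) + 1 :=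
        ⟨rfl, by simp⟩
      simp [matE, hcond]
    · intro x _ hx
      have hcond : ¬(x.1 = (⟨t, ⟨q, hq⟩⟩ : P.Box).1 ∧
          ((x.2 : ℕ) = ((⟨t, ⟨q, hq⟩⟩ : P.Box).2 : ℕ) + 1)) := by
        rintro ⟨h1, h2⟩
        apply hx
        obtain ⟨u, i⟩ := x
        simp only at h1 h2
        subst h1
        have : i = ⟨q + 1, hq1⟩ := Fin.ext (by simp at h2 ⊢; omega)
        rw [this]
      simp [matE, hcond]
    · intro h
      exact absurd (Finset.mem_univ _) h
  · rw [P.ent_eq_zero (by tauto)]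
    apply Finset.sum_eq_zero
    intro x _
    have hcond : ¬(x.1 = (⟨t, ⟨q, hq⟩⟩ : P.Box).1 ∧
        ((x.2 : ℕ) = ((⟨t, ⟨q, hq⟩⟩ : P.Box).2 : ℕ) + 1)) := by
      rintro ⟨h1, h2⟩
      obtain ⟨u, i⟩ := x
      simp only at h1 h2
      subst h1
      have := i.2
      omega
    simp only [matE, Matrix.of_apply, if_neg hcond, mul_zero]

lemma commE_apply (X : Matrix P.Box P.Box ℂ) (s t : Fin P.N) (p q : ℕ)
    (hp : p < P.r s) (hq : q < P.r t) :
    (P.matE * X - X * P.matE) ⟨s, ⟨p, hp⟩⟩ ⟨t, ⟨q, hq⟩⟩ =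
      (if p = 0 then 0 else P.ent X s t (p - 1) q) - P.ent X s t p (q + 1) := by
  rw [Matrix.sub_apply, P.matE_mul_apply X s t p q hp hq, P.mul_matE_apply X s t p q hp hq]

lemma grade_iff (X : Matrix P.Box P.Box ℂ) (j : ℤ) :
    Matrix.toLin' X ∈ gradedPiece P.H j ↔
      ∀ b b' : P.Box, P.col b - P.col b' ≠ j → X b b' = 0 := by
  have h1 : (⁅P.H, Matrix.toLin' X⁆ = (j : ℂ) • Matrix.toLin' X) ↔
      (P.matH * X - X * P.matH = (j : ℂ) • X) := by
    rw [P.H_def', P.toLin'_bracket, ← map_smul]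
    exact ⟨fun h => Matrix.toLin'.injective h, fun h => by rw [h]⟩
  simp only [gradedPiece, Set.mem_setOf_eq]
  rw [h1]
  constructor
  · intro h b b' hne
    have h2 : (P.matH * X - X * P.matH) b b' = ((j : ℂ) • X) b b' := by rw [h]
    rw [Matrix.sub_apply, Matrix.smul_apply, smul_eq_mul] at h2
    rw [matH, Matrix.diagonal_mul, Matrix.mul_diagonal] at h2
    have h3 : (((P.col b - P.col b' : ℤ) : ℂ) - (j : ℂ)) * X b b' = 0 := by
      push_cast
      linear_combination h2
    rcases mul_eq_zero.mp h3 with h4 | h4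
    · exfalso
      apply hne
      have : ((P.col b - P.col b' : ℤ) : ℂ) = ((j : ℤ) : ℂ) := by
        push_cast at h4 ⊢
        linear_combination h4
      exact_mod_cast this
    · exact h4
  · intro h
    ext b b'
    rw [Matrix.sub_apply, Matrix.smul_apply, smul_eq_mul]
    rw [matH, Matrix.diagonal_mul, Matrix.mul_diagonal]
    by_cases hbb : P.col b - P.col b' = j
    · have : ((P.col b : ℤ) : ℂ) - ((P.col b' : ℤ) : ℂ) = (j : ℂ) := by
        push_cast [← hbb]
        ring
      linear_combination (X b b') * this
    · rw [h b b' hbb]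
      ring

lemma bound1 {s t : Fin P.N} {p q : ℕ} {j : ℤ} (hp : p < P.r s) (hq : q < P.r t)
    (hqp : q ≤ p) (hg : P.f s - P.f t + 2 * ((p : ℤ) - (q : ℤ)) = j) (hj : j ≤ -1) :
    p + 1 < P.r s := by
  by_contra hcon
  rcases le_total s t with hst | hts
  · have h1 := P.l_anti s t hst
    omega
  · have h1 := P.f_mono t s hts
    omega

lemma bound2 {s t : Fin P.N} {p q : ℕ} {j : ℤ} (hp : p < P.r s) (hq : q < P.r t)
    (hpq : p ≤ q) (hg : P.f s - P.f t + 2 * ((p : ℤ) - (q : ℤ)) = j + 2) (hj : -1 ≤ j) :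
    q + 1 < P.r t := by
  by_contra hcon
  rcases le_total s t with hst | hts
  · have h1 := P.f_mono s t hst
    omega
  · have h1 := P.l_anti t s hts
    omega

end Pyramid

namespace Pyramid
variable (P : Pyramid)

lemma inj_core (X : Matrix P.Box P.Box ℂ) (j : ℤ) (hj : j ≤ -1)
    (hgr : ∀ b b' : P.Box, P.col b - P.col b' ≠ j → X b b' = 0)
    (hc : P.matE * X - X * P.matE = 0) : X = 0 := by
  have hΦ : ∀ (s t : Fin P.N) (p q : ℕ) (hp : p < P.r s) (hq : q < P.r t),
      (if p = 0 then 0 else P.ent X s t (p - 1) q) - P.ent X s t p (q + 1) = 0 := by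
    intro s t p q hp hq
    rw [← P.commE_apply X s t p q hp hq, hc]
    rfl
  have step1 : ∀ (p q : ℕ) (s t : Fin P.N), p < q → P.ent X s t p q = 0 := by
    intro p
    induction p with
    | zero =>
      intro q s t hpq
      by_cases h : 0 < P.r s ∧ q < P.r t
      · have hq1 : q - 1 < P.r t := by omega
        have h2 := hΦ s t 0 (q - 1) h.1 hq1
        rw [if_pos rfl, zero_sub, neg_eq_zero, show q - 1 + 1 = q by omega] at h2
        exact h2
      · exact P.ent_eq_zero h
    | succ p ih =>
      intro q s t hpq
      by_cases h : p + 1 < P.r s ∧ q < P.r t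
      · have hq1 : q - 1 < P.r t := by omega
        have h2 := hΦ s t (p + 1) (q - 1) h.1 hq1
        rw [if_neg (by omega), show p + 1 - 1 = p from rfl,
          show q - 1 + 1 = q by omega, sub_eq_zero] at h2
        rw [← h2]
        exact ih (q - 1) s t (by omega)
      · exact P.ent_eq_zero h
  have step2 : ∀ (c : ℕ) (s t : Fin P.N) (p q : ℕ), P.r t ≤ q + c → q ≤ p →
      P.ent X s t p q = 0 := by
    intro c
    induction c with
    | zero =>
      intro s t p q h1 h2
      exact P.ent_eq_zero (by omega)
    | succ c ih =>
      intro s t p q h1 h2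
      by_cases h : p < P.r s ∧ q < P.r t
      · by_cases hg : P.f s - P.f t + 2 * ((p : ℤ) - (q : ℤ)) = j
        · have hp1 : p + 1 < P.r s := P.bound1 h.1 h.2 h2 hg hj
          have h3 := hΦ s t (p + 1) q hp1 h.2
          rw [if_neg (by omega), show p + 1 - 1 = p from rfl, sub_eq_zero] at h3
          rw [h3]
          exact ih s t (p + 1) (q + 1) (by omega) (by omega)
        · rw [P.ent_of_lt h.1 h.2]
          apply hgr
          intro hcol
          apply hg
          simp only [col] at hcol
          omega
      · exact P.ent_eq_zero h
  ext b b'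
  obtain ⟨s, ⟨p, hp⟩⟩ := b
  obtain ⟨t, ⟨q, hq⟩⟩ := b'
  show X ⟨s, ⟨p, hp⟩⟩ ⟨t, ⟨q, hq⟩⟩ = 0
  rw [← P.ent_of_lt (X := X) hp hq]
  rcases lt_or_ge p q with h | h
  · exact step1 p q s t h
  · exact step2 (P.r t) s t p q (by omega) h

end Pyramid

namespace Pyramid
variable (P : Pyramid)

/-- The preimage matrix used for surjectivity. -/
noncomputable def sol (Y : Matrix P.Box P.Box ℂ) (j : ℤ) : Matrix P.Box P.Box ℂ :=
  Matrix.of fun b b' : P.Box =>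
    if P.col b - P.col b' = j then
      if (b'.2 : ℕ) ≤ (b.2 : ℕ) then
        ∑ k ∈ Finset.range (P.r b.1), P.ent Y b.1 b'.1 ((b.2 : ℕ) + 1 + k) ((b'.2 : ℕ) + k)
      else
        -∑ k ∈ Finset.range ((b.2 : ℕ) + 1),
          P.ent Y b.1 b'.1 ((b.2 : ℕ) - k) ((b'.2 : ℕ) - 1 - k)
    else 0

lemma sol_grade (Y : Matrix P.Box P.Box ℂ) (j : ℤ) :
    ∀ b b' : P.Box, P.col b - P.col b' ≠ j → P.sol Y j b b' = 0 := by
  intro b b' h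
  simp [sol, h]

lemma col_mk {s : Fin P.N} {p : ℕ} (hp : p < P.r s) :
    P.col ⟨s, ⟨p, hp⟩⟩ = P.f s + 2 * (p : ℤ) := rfl

lemma ent_sol (Y : Matrix P.Box P.Box ℂ) (j : ℤ) {s t : Fin P.N} {p q : ℕ}
    (hp : p < P.r s) (hq : q < P.r t) :
    P.ent (P.sol Y j) s t p q =
      if P.f s + 2 * (p : ℤ) - (P.f t + 2 * (q : ℤ)) = j then
        if q ≤ p then
          ∑ k ∈ Finset.range (P.r s), P.ent Y s t (p + 1 + k) (q + k)
        else
          -∑ k ∈ Finset.range (p + 1), P.ent Y s t (p - k) (q - 1 - k)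
      else 0 := by
  rw [P.ent_of_lt hp hq]
  rfl

lemma surj_core (Y : Matrix P.Box P.Box ℂ) (j : ℤ) (hj : -1 ≤ j)
    (hgr : ∀ b b' : P.Box, P.col b - P.col b' ≠ j + 2 → Y b b' = 0) :
    P.matE * P.sol Y j - P.sol Y j * P.matE = Y := by
  ext b b'
  obtain ⟨s, ⟨p, hp⟩⟩ := b
  obtain ⟨t, ⟨q, hq⟩⟩ := b'
  rw [P.commE_apply]
  by_cases hg : P.f s + 2 * (p : ℤ) - (P.f t + 2 * (q : ℤ)) = j + 2
  · -- on-grade target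
    have hYbb : Y ⟨s, ⟨p, hp⟩⟩ ⟨t, ⟨q, hq⟩⟩ = P.ent Y s t p q := (P.ent_of_lt hp hq).symm
    rcases le_or_gt (q + 1) p with hqp | hpq
    · -- A-case : q < p
      have hp0 : ¬ p = 0 := by omega
      have hpm : p - 1 < P.r s := by omega
      rw [if_neg hp0]
      have e1 : P.ent (P.sol Y j) s t (p - 1) q =
          ∑ k ∈ Finset.range (P.r s), P.ent Y s t (p + k) (q + k) := by
        rw [P.ent_sol Y j hpm hq]
        have hc : ((p - 1 : ℕ) : ℤ) = (p : ℤ) - 1 := by omega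
        rw [hc, if_pos (by omega), if_pos (by omega)]
        apply Finset.sum_congr rfl
        intro k _
        have : p - 1 + 1 + k = p + k := by omega
        rw [this]
      rw [e1]
      by_cases hq1 : q + 1 < P.r t
      · have e2 : P.ent (P.sol Y j) s t p (q + 1) =
            ∑ k ∈ Finset.range (P.r s), P.ent Y s t (p + (k + 1)) (q + (k + 1)) := by
          rw [P.ent_sol Y j hp hq1]
          have hc : ((q + 1 : ℕ) : ℤ) = (q : ℤ) + 1 := by push_cast; ring
          rw [hc, if_pos (by omega), if_pos (by omega)]
          apply Finset.sum_congr rfl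
          intro k _
          have h1 : p + 1 + k = p + (k + 1) := by omega
          have h2 : q + 1 + k = q + (k + 1) := by omega
          rw [h1, h2]
        rw [e2]
        have t1 := Finset.sum_range_succ' (fun k => P.ent Y s t (p + k) (q + k)) (P.r s)
        have t2 := Finset.sum_range_succ (fun k => P.ent Y s t (p + k) (q + k)) (P.r s)
        have t3 : P.ent Y s t (p + P.r s) (q + P.r s) = 0 := P.ent_eq_zero (by omega)
        rw [t3] at t2
        have t4 : P.ent Y s t (p + 0) (q + 0) = P.ent Y s t p q := by norm_num
        rw [t4] at t1
        rw [hYbb]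
        linear_combination t1 - t2
      · have e2 : P.ent (P.sol Y j) s t p (q + 1) = 0 := P.ent_eq_zero (by omega)
        rw [e2, sub_zero, hYbb]
        have hsum : ∑ k ∈ Finset.range (P.r s), P.ent Y s t (p + k) (q + k) =
            P.ent Y s t (p + 0) (q + 0) :=
          Finset.sum_eq_single_of_mem 0 (Finset.mem_range.mpr (by omega))
            (fun k _ hk => P.ent_eq_zero (by omega))
        rw [hsum]
        norm_num
    · -- B-case : p ≤ q
      have hpq' : p ≤ q := by omega
      have hq1 : q + 1 < P.r t :=
        P.bound2 hp hq hpq' (by omega) hj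
      have e2 : P.ent (P.sol Y j) s t p (q + 1) =
          -∑ k ∈ Finset.range (p + 1), P.ent Y s t (p - k) (q - k) := by
        rw [P.ent_sol Y j hp hq1]
        have hc : ((q + 1 : ℕ) : ℤ) = (q : ℤ) + 1 := by push_cast; ring
        rw [hc, if_pos (by omega), if_neg (by omega)]
        simp
      rcases Nat.eq_zero_or_pos p with h0 | h0
      · subst h0
        rw [if_pos rfl, e2, hYbb]
        rw [Finset.sum_range_one]
        norm_num
      · rw [if_neg (by omega)]
        have e1 : P.ent (P.sol Y j) s t (p - 1) q =
            -∑ k ∈ Finset.range p, P.ent Y s t (p - (k + 1)) (q - (k + 1)) := by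
          rw [P.ent_sol Y j (by omega) hq]
          have hc : ((p - 1 : ℕ) : ℤ) = (p : ℤ) - 1 := by omega
          rw [hc, if_pos (by omega), if_neg (by omega)]
          congr 1
          rw [show p - 1 + 1 = p by omega]
          apply Finset.sum_congr rfl
          intro k _
          have h1 : p - 1 - k = p - (k + 1) := by omega
          have h2 : q - 1 - k = q - (k + 1) := by omega
          rw [h1, h2]
        rw [e1, e2, hYbb]
        have t1 := Finset.sum_range_succ' (fun k => P.ent Y s t (p - k) (q - k)) p
        have t4 : P.ent Y s t (p - 0) (q - 0) = P.ent Y s t p q := by norm_num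
        rw [t4] at t1
        linear_combination t1
  · -- off-grade target: everything vanishes
    have hY0 : Y ⟨s, ⟨p, hp⟩⟩ ⟨t, ⟨q, hq⟩⟩ = 0 := by
      apply hgr
      rw [P.col_mk, P.col_mk]
      exact hg
    rw [hY0]
    have h1 : (if p = 0 then 0 else P.ent (P.sol Y j) s t (p - 1) q) = 0 := by
      rcases Nat.eq_zero_or_pos p with h0 | h0
      · rw [if_pos h0]
      · rw [if_neg (by omega), P.ent_sol Y j (by omega) hq, if_neg ?_]
        have hc : ((p - 1 : ℕ) : ℤ) = (p : ℤ) - 1 := by omega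
        rw [hc]
        intro hcontra
        exact hg (by omega)
    have h2 : P.ent (P.sol Y j) s t p (q + 1) = 0 := by
      by_cases hq1 : q + 1 < P.r t
      · rw [P.ent_sol Y j hp hq1, if_neg ?_]
        push_cast
        intro hcontra
        exact hg (by omega)
      · exact P.ent_eq_zero (by omega)
    rw [h1, h2, sub_zero]

end Pyramid

/-- For any pyramid `P`, the associated endomorphisms of
`V(P) = ℂ^{B(P)}` satisfy `⁅h(P), e(P)⁆ = 2 • e(P)` (commutator bracket on
`End(V(P))`), and the pair `(h(P), e(P))` is good: for every integer `j ≤ -1` the map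
`x ↦ ⁅e(P), x⁆` is injective from the `j`-eigenspace of `ad h(P)` to the
`(j+2)`-eigenspace, and for every integer `j ≥ -1` it is surjective onto the
`(j+2)`-eigenspace. -/
theorem pyramid_pair_is_good (P : Pyramid) :
    ⁅P.H, P.E⁆ = (2 : ℂ) • P.E ∧ IsGoodPair P.H P.E := by
  refine ⟨?_, ?_, ?_⟩
  · -- ⁅H, E⁆ = 2 • E
    rw [P.H_def', P.E_def, P.toLin'_bracket, ← map_smul]
    congr 1
    ext b b'
    rw [Matrix.sub_apply, Matrix.smul_apply, smul_eq_mul]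
    rw [Pyramid.matH, Matrix.diagonal_mul, Matrix.mul_diagonal]
    by_cases h : b.1 = b'.1 ∧ (b.2 : ℕ) = (b'.2 : ℕ) + 1
    · have hE : P.matE b b' = 1 := by
        simp only [Pyramid.matE, Matrix.of_apply, if_pos h]
      rw [hE]
      have hcol : P.col b - P.col b' = 2 := by
        obtain ⟨h1, h2⟩ := h
        have hf : P.f b.1 = P.f b'.1 := by rw [h1]
        simp only [Pyramid.col]
        omega
      have : ((P.col b : ℤ) : ℂ) - ((P.col b' : ℤ) : ℂ) = 2 := by
        rw [← Int.cast_sub, hcol]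
        norm_num
      linear_combination this
    · have hE : P.matE b b' = 0 := by
        simp only [Pyramid.matE, Matrix.of_apply, if_neg h]
      rw [hE]
      ring
  · -- injectivity
    intro j hj x hx y hy hxy
    simp only at hxy
    have hsub : ⁅P.E, x - y⁆ = 0 := by
      have h0 := hxy
      simp only [Ring.lie_def] at h0 ⊢
      rw [← sub_eq_zero] at h0
      rw [mul_sub, sub_mul, ← h0]
      abel
    have hgrsub : ⁅P.H, x - y⁆ = (j : ℂ) • (x - y) := by
      simp only [gradedPiece, Set.mem_setOf_eq] at hx hy
      simp only [Ring.lie_def] at hx hy ⊢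
      rw [mul_sub, sub_mul, smul_sub, ← hx, ← hy]
      abel
    set X := LinearMap.toMatrix' (x - y) with hXdef
    have hXlin : Matrix.toLin' X = x - y := Matrix.toLin'_toMatrix' _
    have hX0 : X = 0 := by
      apply P.inj_core X j hj
      · have : Matrix.toLin' X ∈ gradedPiece P.H j := by
          simp only [gradedPiece, Set.mem_setOf_eq, hXlin]
          exact hgrsub
        exact (P.grade_iff X j).mp this
      · have h1 : Matrix.toLin' (P.matE * X - X * P.matE) = 0 := by
          rw [← P.toLin'_bracket, hXlin, ← P.E_def, hsub]
        have hz : Matrix.toLin' (0 : Matrix P.Box P.Box ℂ) = (0 : Module.End ℂ P.V) := by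
          apply LinearMap.ext
          intro v
          rw [Matrix.toLin'_apply, Matrix.zero_mulVec]
          rfl
        exact Matrix.toLin'.injective (h1.trans hz.symm)
    have hz2 : Matrix.toLin' (0 : Matrix P.Box P.Box ℂ) = (0 : Module.End ℂ P.V) := by
      apply LinearMap.ext
      intro v
      rw [Matrix.toLin'_apply, Matrix.zero_mulVec]
      rfl
    have : x - y = 0 := by rw [← hXlin, hX0, hz2]
    exact sub_eq_zero.mp this
  · -- surjectivity
    intro j hj y hy
    set Y := LinearMap.toMatrix' y with hYdef
    have hYlin : Matrix.toLin' Y = y := Matrix.toLin'_toMatrix' _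
    have hgr : ∀ b b' : P.Box, P.col b - P.col b' ≠ j + 2 → Y b b' = 0 := by
      apply (P.grade_iff Y (j + 2)).mp
      rw [hYlin]
      exact hy
    refine ⟨Matrix.toLin' (P.sol Y j), ?_, ?_⟩
    · exact (P.grade_iff (P.sol Y j) j).mpr (P.sol_grade Y j)
    · show ⁅P.E, Matrix.toLin' (P.sol Y j)⁆ = y
      rw [P.E_def, P.toLin'_bracket, P.surj_core Y j hj hgr, hYlin]
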